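/- Let p(z) = 1 + c₁z + c₂z² + ⋯ be analytic on the unit disc with Re(p(z)) > 0, and let 1/2 ≤ v < 1. Then |c₂ - v c₁²| + (1 - v)|c₁|² ≤ 2. -/

import Mathlib

open Metric
open Set Complex
-- Möbius identity
lemma mobius_lt (a w : ℂ) (ha : ‖a‖ < 1) (hw : ‖w‖ < 1) :
    (1 - (starRingEnd ℂ) a * w) ≠ 0 ∧
    ‖(w - a) / (1 - (starRingEnd ℂ) a * w)‖ < 1 := by
  have key : Complex.normSq (1 - (starRingEnd ℂ) a * w) - Complex.normSq (w - a)
      = (1 - Complex.normSq a) * (1 - Complex.normSq w) := by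
    simp only [Complex.normSq_apply, Complex.sub_re, Complex.sub_im, Complex.mul_re,
      Complex.mul_im, Complex.one_re, Complex.one_im, Complex.conj_re, Complex.conj_im]
    ring
  have ha2 : Complex.normSq a < 1 := by
    have := Complex.sq_norm a; nlinarith [norm_nonneg a]
  have hw2 : Complex.normSq w < 1 := by
    have := Complex.sq_norm w; nlinarith [norm_nonneg w]
  have hpos : 0 < Complex.normSq (1 - (starRingEnd ℂ) a * w) - Complex.normSq (w - a) := by
    rw [key]; nlinarith
  have hne : (1 - (starRingEnd ℂ) a * w) ≠ 0 := by
    intro h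
    rw [h] at hpos
    simp [Complex.normSq_nonneg] at hpos
    nlinarith [Complex.normSq_nonneg (w - a)]
  refine ⟨hne, ?_⟩
  have hposd : 0 < ‖1 - (starRingEnd ℂ) a * w‖ := norm_pos_iff.mpr hne
  rw [norm_div, div_lt_one hposd]
  have h1 := Complex.sq_norm (w - a)
  have h2 := Complex.sq_norm (1 - (starRingEnd ℂ) a * w)
  nlinarith [norm_nonneg (w - a), norm_nonneg (1 - (starRingEnd ℂ) a * w)]

lemma schwarz_pick_coeff2 (ω : ℂ → ℂ) (hd : DifferentiableOn ℂ ω (ball 0 1))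
    (h0 : ω 0 = 0) (hmaps : MapsTo ω (ball 0 1) (ball 0 1)) :
    ‖deriv (dslope ω 0) 0‖ ≤ 1 - (‖deriv ω 0‖)^2 := by
  have h01 : (0:ℂ) ∈ ball (0:ℂ) 1 := mem_ball_self one_pos
  have hmaps' : MapsTo ω (ball 0 1) (ball (ω 0) 1) := by rwa [h0]
  set g := dslope ω 0 with hg
  have hgd : DifferentiableOn ℂ g (ball 0 1) :=
    (differentiableOn_dslope (ball_mem_nhds _ one_pos)).mpr hd
  have hg1 : ∀ z ∈ ball (0:ℂ) 1, ‖g z‖ ≤ 1 := fun z hz => by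
    simpa using Complex.norm_dslope_le_div_of_mapsTo_ball hd (hmaps'.mono_right ball_subset_closedBall) hz
  have hg00 : g 0 = deriv ω 0 := dslope_same ω 0
  by_cases hex : ∃ z₀ ∈ ball (0:ℂ) 1, ‖dslope ω 0 z₀‖ = 1
  · -- boundary case: ω is a rotation
    obtain ⟨z₀, hz₀, hz₀e⟩ := hex
    have heq := Complex.affine_of_mapsTo_ball_of_exists_norm_dslope_eq_div
      hd (hmaps'.mono_right ball_subset_closedBall) hz₀ (by simpa using hz₀e)
    set C := dslope ω 0 z₀ with hC
    have hCabs : ‖C‖ = 1 := hz₀e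
    -- ω z = z * C on ball
    have heq' : EqOn ω (fun z => z * C) (ball 0 1) := by
      intro z hz
      have := heq hz
      simpa [h0, smul_eq_mul] using this
    have hgeq : EqOn g (fun _ => C) (ball 0 1) := by
      intro z hz
      rcases eq_or_ne z 0 with rfl | hzne
      · rw [hg00]
        have hev : ω =ᶠ[nhds (0:ℂ)] (fun z => z * C) :=
          Filter.eventuallyEq_of_mem (isOpen_ball.mem_nhds h01) heq'
        rw [hev.deriv_eq]
        simp [deriv_mul_const_field]
      · rw [hg, dslope_of_ne _ hzne, slope_def_field]
        rw [heq' hz, h0]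
        field_simp
        ring
    have hgev : g =ᶠ[nhds (0:ℂ)] (fun _ => C) :=
      Filter.eventuallyEq_of_mem (isOpen_ball.mem_nhds h01) hgeq
    rw [hgev.deriv_eq, deriv_const]
    have : ‖deriv ω 0‖ = 1 := by
      rw [← hg00, hgeq h01]; exact hCabs
    simp [this]
  · -- interior case: Schwarz–Pick via Möbius
    push_neg at hex
    have hglt : ∀ z ∈ ball (0:ℂ) 1, ‖g z‖ < 1 := fun z hz =>
      lt_of_le_of_ne (hg1 z hz) (hex z hz)
    set a := g 0 with haeq
    have ha : ‖a‖ < 1 := hglt 0 h01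
    set h : ℂ → ℂ := fun w => (w - a) / (1 - (starRingEnd ℂ) a * w) with hh
    set H : ℂ → ℂ := fun z => h (g z) with hH
    have hHd : DifferentiableOn ℂ H (ball 0 1) := by
      intro z hz
      have hgz := hglt z hz
      have hne := (mobius_lt a (g z) ha (by simpa using hgz)).1
      exact (((differentiableWithinAt_id.sub (differentiableWithinAt_const a)).div
        ((differentiableWithinAt_const 1).sub ((differentiableWithinAt_const _).mul
        differentiableWithinAt_id)) hne).comp z (hgd z hz) (mapsTo_univ _ _)).mono
        (by intro x hx; trivial)
    have hH0 : H 0 = 0 := by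
      simp only [hH, hh, ← haeq]
      simp [sub_self]
    have hHmaps : MapsTo H (ball 0 1) (ball (H 0) 1) := by
      rw [hH0]
      intro z hz
      rw [mem_ball_zero_iff]
      exact (mobius_lt a (g z) ha (by simpa using hglt z hz)).2
    have hHder : ‖deriv H 0‖ ≤ 1 := by
      simpa using Complex.norm_deriv_le_div_of_mapsTo_ball hHd (hHmaps.mono_right ball_subset_closedBall) one_pos
    -- compute deriv H 0
    have hne0 : (1 - (starRingEnd ℂ) a * a) ≠ 0 := (mobius_lt a a ha ha).1
    have hga : HasDerivAt g (deriv g 0) 0 :=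
      ((hgd 0 h01).differentiableAt (isOpen_ball.mem_nhds h01)).hasDerivAt
    have hha : HasDerivAt h (1 / (1 - (starRingEnd ℂ) a * a)) a := by
      have h1 : HasDerivAt (fun w : ℂ => w - a) 1 a := (hasDerivAt_id a).sub_const a
      have h2 : HasDerivAt (fun w : ℂ => 1 - (starRingEnd ℂ) a * w)
          (-(starRingEnd ℂ) a) a := by
        simpa using ((hasDerivAt_id a).const_mul ((starRingEnd ℂ) a)).const_sub 1
      have : HasDerivAt h _ a := h1.div h2 hne0
      convert this using 1
      field_simp
      ring
    have hcomp : HasDerivAt H ((1 / (1 - (starRingEnd ℂ) a * a)) * deriv g 0) 0 :=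
      (HasDerivAt.comp (h := g) 0 hha hga : _)
    have hderH : deriv H 0 = deriv g 0 / (1 - (starRingEnd ℂ) a * a) := by
      rw [hcomp.deriv]; ring
    rw [hderH] at hHder
    have habs : ‖1 - (starRingEnd ℂ) a * a‖ = 1 - (‖a‖)^2 := by
      have : (starRingEnd ℂ) a * a = (Complex.normSq a : ℂ) := by
        rw [mul_comm, Complex.mul_conj]
      rw [this, ← Complex.ofReal_one, ← Complex.ofReal_sub, Complex.norm_real, Real.norm_eq_abs,
        _root_.abs_of_nonneg (by nlinarith [Complex.sq_norm a, norm_nonneg a]),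
        ← Complex.sq_norm]
    rw [norm_div, habs, div_le_one (by nlinarith [norm_nonneg a])]
      at hHder
    have hfin : ‖deriv g 0‖ ≤ 1 - (‖deriv ω 0‖) ^ 2 := by
      rw [← hg00]; exact hHder
    exact hfin

lemma deriv_dslope_zero (f : ℂ → ℂ) (hf : AnalyticAt ℂ f 0) :
    deriv (dslope f 0) 0 = deriv (deriv f) 0 / 2 := by
  obtain ⟨q, hq⟩ := hf
  have h1 : deriv (dslope f 0) 0 = q.coeff 2 := by
    have := hq.has_fpower_series_dslope_fslope.deriv
    rw [this]
    show q.fslope.coeff 1 = q.coeff 2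
    rw [FormalMultilinearSeries.coeff_fslope]
  have h2 : deriv (deriv f) 0 = 2 * q.coeff 2 := by
    obtain ⟨r, hr⟩ := hq
    have h3 := hr.factorial_smul (1 : ℂ) 2
    have h4 : iteratedDeriv 2 f 0 = deriv (deriv f) 0 := by
      rw [iteratedDeriv_succ, iteratedDeriv_one]
    rw [iteratedDeriv_eq_iteratedFDeriv] at h4
    rw [← h4, ← h3]
    show (Nat.factorial 2) • q.coeff 2 = 2 * q.coeff 2
    simp [nsmul_eq_mul, Nat.factorial]
  rw [h1, h2]
  ring

theorem ma_minda_refined_right (P : ℂ → ℂ) (hP : AnalyticOn ℂ P (ball 0 1))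
    (hP0 : P 0 = 1) (hre : ∀ z ∈ ball (0 : ℂ) 1, 0 < (P z).re)
    (c₁ c₂ : ℂ) (hc₁ : c₁ = deriv P 0) (hc₂ : c₂ = iteratedDeriv 2 P 0 / 2)
    (v : ℝ) (hv0 : 1 / 2 ≤ v) (hv : v < 1) :
    ‖c₂ - (v : ℂ) * c₁ ^ 2‖ + (1 - v) * (‖c₁‖) ^ 2 ≤ 2 := by
  have h01 : (0:ℂ) ∈ ball (0:ℂ) 1 := mem_ball_self one_pos
  have hPa : AnalyticOnNhd ℂ P (ball 0 1) :=
    (isOpen_ball.analyticOn_iff_analyticOnNhd).mp hP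
  have hPd : DifferentiableOn ℂ P (ball 0 1) := hPa.differentiableOn
  have hQne : ∀ z ∈ ball (0:ℂ) 1, P z + 1 ≠ 0 := by
    intro z hz h
    have := congrArg Complex.re h
    simp only [Complex.add_re, Complex.one_re, Complex.zero_re] at this
    linarith [hre z hz]
  set ω : ℂ → ℂ := fun z => (P z - 1) / (P z + 1) with hω
  have hωd : DifferentiableOn ℂ ω (ball 0 1) := fun z hz =>
    (((hPd z hz).sub (differentiableWithinAt_const 1)).div
      ((hPd z hz).add (differentiableWithinAt_const 1)) (hQne z hz))
  have hω0 : ω 0 = 0 := by simp [hω, hP0]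
  have hωmaps : MapsTo ω (ball 0 1) (ball 0 1) := by
    intro z hz
    rw [mem_ball_zero_iff]
    have hkey : Complex.normSq (P z + 1) - Complex.normSq (P z - 1) = 4 * (P z).re := by
      simp only [Complex.normSq_apply, Complex.add_re, Complex.add_im, Complex.sub_re,
        Complex.sub_im, Complex.one_re, Complex.one_im]
      ring
    have hpos : 0 < ‖P z + 1‖ := norm_pos_iff.mpr (hQne z hz)
    show ‖(P z - 1) / (P z + 1)‖ < 1
    rw [norm_div, div_lt_one hpos]
    have h1 := Complex.sq_norm (P z - 1)
    have h2 := Complex.sq_norm (P z + 1)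
    nlinarith [norm_nonneg (P z - 1), norm_nonneg (P z + 1), hre z hz]
  -- derivative of ω on the ball
  have hωder : ∀ z ∈ ball (0:ℂ) 1, HasDerivAt ω (2 * deriv P z / (P z + 1)^2) z := by
    intro z hz
    have hPz : HasDerivAt P (deriv P z) z :=
      (hPd z hz).differentiableAt (isOpen_ball.mem_nhds hz) |>.hasDerivAt
    have h1 : HasDerivAt (fun x => (P x - 1) / (P x + 1)) _ z :=
      (hPz.sub_const 1).div (hPz.add_const 1) (hQne z hz)
    convert h1 using 1
    ring
  have hωderiv : ∀ z ∈ ball (0:ℂ) 1, deriv ω z = 2 * deriv P z / (P z + 1)^2 :=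
    fun z hz => (hωder z hz).deriv
  have hP01 : P 0 + 1 = 2 := by rw [hP0]; norm_num
  have ha₁ : deriv ω 0 = c₁ / 2 := by
    rw [hωderiv 0 h01, hP01, hc₁]; norm_num; ring
  -- second derivative
  have hd₂ : deriv (deriv ω) 0 = c₂ - c₁^2 / 2 := by
    have hev : deriv ω =ᶠ[nhds (0:ℂ)] fun z => 2 * deriv P z / (P z + 1)^2 :=
      Filter.eventuallyEq_of_mem (isOpen_ball.mem_nhds h01) hωderiv
    rw [hev.deriv_eq]
    have hP'd : HasDerivAt (deriv P) (deriv (deriv P) 0) 0 :=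
      ((hPa.deriv 0 h01).differentiableAt).hasDerivAt
    have hPz : HasDerivAt P c₁ 0 := by
      rw [hc₁]; exact ((hPd 0 h01).differentiableAt (isOpen_ball.mem_nhds h01)).hasDerivAt
    have hN : HasDerivAt (fun z => 2 * deriv P z) (2 * deriv (deriv P) 0) 0 :=
      hP'd.const_mul 2
    have hD : HasDerivAt (fun z => (P z + 1)^2) (2 * (P 0 + 1) * c₁) 0 := by
      have : HasDerivAt (fun z => (P z + 1)^2) _ 0 := (hPz.add_const 1).pow 2
      convert this using 1
      simp [hP01]
    have hD0 : (P 0 + 1)^2 ≠ 0 := by rw [hP01]; norm_num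
    have hq : HasDerivAt (fun z => 2 * deriv P z / (P z + 1)^2) _ 0 := hN.div hD hD0
    rw [hq.deriv]
    have h2 : iteratedDeriv 2 P 0 = deriv (deriv P) 0 := by
      rw [iteratedDeriv_succ, iteratedDeriv_one]
    have hc₂' : deriv (deriv P) 0 = 2 * c₂ := by rw [hc₂, h2]; ring
    rw [hc₂', ← hc₁, hP01]
    ring
  -- ω analytic at 0
  have hωa : AnalyticAt ℂ ω 0 := by
    apply AnalyticAt.div
    · exact (hPa 0 h01).sub analyticAt_const
    · exact (hPa 0 h01).add analyticAt_const
    · exact hQne 0 h01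
  have ha₂ : deriv (dslope ω 0) 0 = (c₂ - c₁^2/2) / 2 := by
    rw [deriv_dslope_zero ω hωa, hd₂]
  have hmain := schwarz_pick_coeff2 ω hωd hω0 hωmaps
  rw [ha₂, ha₁] at hmain
  have h2ne : ‖(2:ℂ)‖ = 2 := by norm_num
  rw [norm_div, norm_div, h2ne] at hmain
  -- hmain : |c₂ - c₁²/2| / 2 ≤ 1 - (|c₁|/2)^2
  have hkey : ‖c₂ - c₁^2/2‖ ≤ 2 - (‖c₁‖)^2 / 2 := by
    have := hmain
    rw [div_pow] at this
    nlinarith [norm_nonneg (c₂ - c₁^2/2), norm_nonneg c₁]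
  -- triangle inequality
  have hsplit : c₂ - (v:ℂ) * c₁^2 = (c₂ - c₁^2/2) + (((1:ℝ)/2 - v : ℝ) : ℂ) * c₁^2 := by
    push_cast
    ring
  have htri : ‖c₂ - (v:ℂ) * c₁^2‖ ≤
      ‖c₂ - c₁^2/2‖ + (v - 1/2) * (‖c₁‖)^2 := by
    rw [hsplit]
    refine (norm_add_le _ _).trans ?_
    rw [norm_mul, Complex.norm_real, Real.norm_eq_abs, norm_pow]
    rw [abs_of_nonpos (by linarith)]
    ring_nf
    linarith
  have hc₁sq : 0 ≤ (‖c₁‖)^2 := sq_nonneg _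
  linarith
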